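/- For every integer k ≥ 4, the following binomial-coefficient identity holds: Σ_{r=1}^{k−2} Σ_{s=1}^{k−1} C(r−1+s, r−1)·C(2k−r−2−s, k−r−2) = ((2k)!/(k!)²)·((k−2)/(2(2k−1)))·(k−3 + 4/(k+1)), where C(a,b) denotes the binomial coefficient a choose b. -/

import Mathlib

open Finset PowerSeries

/-- Convolution identity: `∑_{j=0}^n C(a+j,a) C(b+n-j,b) = C(a+b+1+n, a+b+1)`. -/
lemma conv_choose (a b n : ℕ) :
    ∑ j ∈ Finset.range (n + 1),
        ((Nat.choose (a + j) a : ℝ) * (Nat.choose (b + (n - j)) b : ℝ))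
      = (Nat.choose (a + b + 1 + n) (a + b + 1) : ℝ) := by
  have h : ((PowerSeries.mk 1 : ℝ⟦X⟧) ^ (a + 1)) * ((PowerSeries.mk 1 : ℝ⟦X⟧) ^ (b + 1))
      = (PowerSeries.mk 1 : ℝ⟦X⟧) ^ ((a + b + 1) + 1) := by
    rw [← pow_add]; congr 1; omega
  rw [PowerSeries.mk_one_pow_eq_mk_choose_add, PowerSeries.mk_one_pow_eq_mk_choose_add,
      PowerSeries.mk_one_pow_eq_mk_choose_add] at h
  have h2 := congrArg (PowerSeries.coeff (R := ℝ) n) h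
  rw [PowerSeries.coeff_mul] at h2
  simp only [PowerSeries.coeff_mk] at h2
  rwa [Finset.Nat.sum_antidiagonal_eq_sum_range_succ_mk] at h2

/-- Hockey stick in the needed form. -/
lemma base_sum (m : ℕ) :
    ∑ i ∈ Finset.range (m + 2), Nat.choose (m + 4 + i) i
      = Nat.choose (2 * m + 6) (m + 5) := by
  have h : ∀ i ∈ Finset.range (m + 2),
      Nat.choose (m + 4 + i) i = Nat.choose (m + 4 + i) (m + 4) := by
    intro i _
    rw [← Nat.choose_symm (by omega : m + 4 ≤ m + 4 + i)]
    congr 1; omega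
  rw [Finset.sum_congr rfl h]
  have h2 : ∑ j ∈ Finset.Icc (m + 4) (2 * m + 5), Nat.choose j (m + 4)
      = Nat.choose (2 * m + 6) (m + 5) := by
    have := Nat.sum_Icc_choose (2 * m + 5) (m + 4)
    simpa [show 2 * m + 5 + 1 = 2 * m + 6 from rfl] using this
  rw [← h2, ← Finset.Ico_add_one_right_eq_Icc, Finset.sum_Ico_eq_sum_range]
  apply Finset.sum_congr
  · congr 1; omega
  · intro i _; rfl

lemma aux_arith (x F D : ℝ) (h2 : x+2 ≠ 0) (h3 : x+3 ≠ 0) (h4 : x+4 ≠ 0) (h5 : x+5 ≠ 0)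
    (h7 : 2*x+7 ≠ 0) (hD : D ≠ 0) :
    (x+2) * (F / ((x+2)*D*((x+4)*(x+3)*((x+2)*D))))
      - F / ((x+5)*((x+4)*(x+3)*((x+2)*D))*D)
      - F / ((x+5)*((x+4)*(x+3)*((x+2)*D))*D)
    = ((2*x+8)*(2*x+7)*F) / (((x+4)*(x+3)*((x+2)*D))^2)
        * ((x+2) / (2*(2*x+7))) * (x+1 + 4/(x+5)) := by
  field_simp
  rw [eq_div_iff (by rw [mul_comm]; exact h7)]
  ring

set_option maxHeartbeats 1000000 in
/-- **Binomial coefficient identity** (end of the proof of Lemma 3 of the paper): for `k ≥ 4`,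
`∑_{r=1}^{k-2} ∑_{s=1}^{k-1} C(r-1+s, r-1) C(2k-r-2-s, k-r-2)
   = ((2k)! / (k!)²) ((k-2) / (2(2k-1))) (k - 3 + 4/(k+1))`. -/
theorem binomial_sum_identity (k : ℕ) (hk : 4 ≤ k) :
    (∑ r ∈ Finset.Icc 1 (k - 2), ∑ s ∈ Finset.Icc 1 (k - 1),
        ((Nat.choose (r - 1 + s) (r - 1) : ℝ) * (Nat.choose (2 * k - r - 2 - s) (k - r - 2) : ℝ)))
      = ((Nat.factorial (2 * k) : ℝ) / (Nat.factorial k : ℝ) ^ 2)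
        * (((k : ℝ) - 2) / (2 * (2 * (k : ℝ) - 1)))
        * ((k : ℝ) - 3 + 4 / ((k : ℝ) + 1)) := by
  obtain ⟨m, rfl⟩ : ∃ m, k = m + 4 := ⟨k - 4, by omega⟩
  clear hk
  -- inner sum evaluation
  have inner : ∀ r ∈ Finset.Icc 1 (m + 2),
      (∑ s ∈ Finset.Icc 1 (m + 4 - 1),
        ((Nat.choose (r - 1 + s) (r - 1) : ℝ)
          * (Nat.choose (2 * (m + 4) - r - 2 - s) ((m + 4) - r - 2) : ℝ)))
      = (Nat.choose (2 * m + 6) (m + 2) : ℝ)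
        - (Nat.choose (m + 4 + (m + 2 - r)) (m + 2 - r) : ℝ)
        - (Nat.choose (m + 4 + (r - 1)) (r - 1) : ℝ) := by
    intro r hr
    rw [Finset.mem_Icc] at hr
    have key := conv_choose (r - 1) (m + 2 - r) (m + 4)
    rw [show (r - 1) + (m + 2 - r) + 1 = m + 2 from by omega] at key
    rw [show m + 2 + (m + 4) = 2 * m + 6 from by omega] at key
    rw [Finset.sum_range_succ, Finset.sum_range_succ'] at key
    -- key : S' + g 0 + g (m+4) = C(2m+6, m+2) with S' = ∑_{i∈range (m+3)} g (i+1)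
    have e0 : ((Nat.choose (r - 1 + 0) (r - 1) : ℝ)
        * (Nat.choose (m + 2 - r + (m + 4 - 0)) (m + 2 - r) : ℝ))
        = (Nat.choose (m + 4 + (m + 2 - r)) (m + 2 - r) : ℝ) := by
      rw [show r - 1 + 0 = r - 1 from rfl, Nat.choose_self,
        show m + 2 - r + (m + 4 - 0) = m + 4 + (m + 2 - r) from by omega]
      ring
    have ek : ((Nat.choose (r - 1 + (m + 4)) (r - 1) : ℝ)
        * (Nat.choose (m + 2 - r + (m + 4 - (m + 4))) (m + 2 - r) : ℝ))
        = (Nat.choose (m + 4 + (r - 1)) (r - 1) : ℝ) := by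
      rw [show m + 2 - r + (m + 4 - (m + 4)) = m + 2 - r from by omega, Nat.choose_self,
        show r - 1 + (m + 4) = m + 4 + (r - 1) from by omega]
      ring
    rw [e0, ek] at key
    have hsum : (∑ s ∈ Finset.Icc 1 (m + 4 - 1),
        ((Nat.choose (r - 1 + s) (r - 1) : ℝ)
          * (Nat.choose (2 * (m + 4) - r - 2 - s) ((m + 4) - r - 2) : ℝ)))
        = ∑ i ∈ Finset.range (m + 3),
          ((Nat.choose (r - 1 + (i + 1)) (r - 1) : ℝ)
            * (Nat.choose (m + 2 - r + (m + 4 - (i + 1))) (m + 2 - r) : ℝ)) := by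
      rw [show m + 4 - 1 = m + 3 from rfl, ← Finset.Ico_add_one_right_eq_Icc, Finset.sum_Ico_eq_sum_range]
      refine Finset.sum_congr (by congr 1) fun i hi => ?_
      rw [Finset.mem_range] at hi
      rw [show 1 + i = i + 1 from by omega,
        show 2 * (m + 4) - r - 2 - (i + 1) = m + 2 - r + (m + 4 - (i + 1)) from by omega,
        show m + 4 - r - 2 = m + 2 - r from by omega]
    rw [hsum]
    linarith [key]
  rw [show m + 4 - 2 = m + 2 from rfl] at *
  rw [Finset.sum_congr rfl inner]
  rw [Finset.sum_sub_distrib, Finset.sum_sub_distrib, Finset.sum_const]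
  rw [Nat.card_Icc]
  -- the two boundary sums
  have L2 : ∑ r ∈ Finset.Icc 1 (m + 2), (Nat.choose (m + 4 + (r - 1)) (r - 1) : ℝ)
      = (Nat.choose (2 * m + 6) (m + 5) : ℝ) := by
    rw [← Nat.cast_sum, ← base_sum m]
    congr 1
    rw [← Finset.Ico_add_one_right_eq_Icc, Finset.sum_Ico_eq_sum_range]
    refine Finset.sum_congr (by congr 1) fun i hi => ?_
    congr 1 <;> omega
  have L1 : ∑ r ∈ Finset.Icc 1 (m + 2), (Nat.choose (m + 4 + (m + 2 - r)) (m + 2 - r) : ℝ)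
      = (Nat.choose (2 * m + 6) (m + 5) : ℝ) := by
    rw [← Nat.cast_sum, ← base_sum m]
    congr 1
    rw [← Finset.Ico_add_one_right_eq_Icc, Finset.sum_Ico_eq_sum_range]
    rw [show m + 2 + 1 - 1 = m + 2 from rfl]
    rw [← Finset.sum_range_reflect]
    refine Finset.sum_congr rfl fun i hi => ?_
    rw [Finset.mem_range] at hi
    congr 1 <;> omega
  rw [L1, L2]
  -- now the closed-form computation
  have hc1 := Nat.choose_mul_factorial_mul_factorial (show m + 2 ≤ 2 * m + 6 by omega)
  have hc2 := Nat.choose_mul_factorial_mul_factorial (show m + 5 ≤ 2 * m + 6 by omega)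
  rw [show 2 * m + 6 - (m + 2) = m + 4 from by omega] at hc1
  rw [show 2 * m + 6 - (m + 5) = m + 1 from by omega] at hc2
  have hC1 : (Nat.choose (2 * m + 6) (m + 2) : ℝ)
      * ((Nat.factorial (m + 2) : ℝ) * (Nat.factorial (m + 4) : ℝ))
      = (Nat.factorial (2 * m + 6) : ℝ) := by
    exact_mod_cast congrArg (Nat.cast (R := ℝ)) (by rw [← hc1]; ring)
  have hC2 : (Nat.choose (2 * m + 6) (m + 5) : ℝ)
      * ((Nat.factorial (m + 5) : ℝ) * (Nat.factorial (m + 1) : ℝ))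
      = (Nat.factorial (2 * m + 6) : ℝ) := by
    exact_mod_cast congrArg (Nat.cast (R := ℝ)) (by rw [← hc2]; ring)
  have hf8 : (Nat.factorial (2 * (m + 4)) : ℝ)
      = (2 * (m : ℝ) + 8) * (2 * (m : ℝ) + 7) * (Nat.factorial (2 * m + 6) : ℝ) := by
    rw [show 2 * (m + 4) = (2 * m + 7) + 1 from by omega, Nat.factorial_succ,
      show 2 * m + 7 = (2 * m + 6) + 1 from rfl, Nat.factorial_succ]
    push_cast; ring
  have hf5 : (Nat.factorial (m + 5) : ℝ) = ((m : ℝ) + 5) * (Nat.factorial (m + 4) : ℝ) := by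
    rw [show m + 5 = (m + 4) + 1 from rfl, Nat.factorial_succ]; push_cast; try ring
  have hf4 : (Nat.factorial (m + 4) : ℝ)
      = ((m : ℝ) + 4) * ((m : ℝ) + 3) * (Nat.factorial (m + 2) : ℝ) := by
    rw [show m + 4 = (m + 3) + 1 from rfl, Nat.factorial_succ,
      show m + 3 = (m + 2) + 1 from rfl, Nat.factorial_succ]
    push_cast; try ring
  have hf2 : (Nat.factorial (m + 2) : ℝ) = ((m : ℝ) + 2) * (Nat.factorial (m + 1) : ℝ) := by
    rw [show m + 2 = (m + 1) + 1 from rfl, Nat.factorial_succ]; push_cast; try ring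
  have hA : (0 : ℝ) < (Nat.factorial (m + 1) : ℝ) := by
    exact_mod_cast Nat.factorial_pos (m + 1)
  have hF : (0 : ℝ) < (Nat.factorial (2 * m + 6) : ℝ) := by
    exact_mod_cast Nat.factorial_pos (2 * m + 6)
  have hC1' : (Nat.choose (2 * m + 6) (m + 2) : ℝ)
      = (Nat.factorial (2 * m + 6) : ℝ)
        / (((m : ℝ) + 2) * (Nat.factorial (m + 1) : ℝ)
          * (((m : ℝ) + 4) * ((m : ℝ) + 3) * (((m : ℝ) + 2) * (Nat.factorial (m + 1) : ℝ)))) := by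
    rw [eq_div_iff (by positivity)]
    rw [← hC1, hf4, hf2]; try ring
  have hC2' : (Nat.choose (2 * m + 6) (m + 5) : ℝ)
      = (Nat.factorial (2 * m + 6) : ℝ)
        / ((((m : ℝ) + 5) * (((m : ℝ) + 4) * ((m : ℝ) + 3) * (((m : ℝ) + 2)
          * (Nat.factorial (m + 1) : ℝ)))) * (Nat.factorial (m + 1) : ℝ)) := by
    rw [eq_div_iff (by positivity)]
    rw [← hC2, hf5, hf4, hf2]; try ring
  have n2 : ((m : ℝ) + 2) ≠ 0 := by positivity
  have n3 : ((m : ℝ) + 3) ≠ 0 := by positivity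
  have n4 : ((m : ℝ) + 4) ≠ 0 := by positivity
  have n5 : ((m : ℝ) + 5) ≠ 0 := by positivity
  have n7 : (2 * (m : ℝ) + 7) ≠ 0 := by positivity
  have nA : ((Nat.factorial (m + 1) : ℝ)) ≠ 0 := ne_of_gt hA
  rw [hC1', hC2', hf8, hf4, hf2]
  rw [show m + 2 + 1 - 1 = m + 2 from rfl]
  simp only [nsmul_eq_mul]
  push_cast
  linear_combination aux_arith ((m : ℝ)) (Nat.factorial (2 * m + 6) : ℝ)
    (Nat.factorial (m + 1) : ℝ) n2 n3 n4 n5 n7 nA
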